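/- Let d ≥ 2 be an even integer and κ ≥ 1 an integer coprime to d (hence κ is odd), write d' = d/2, let i, j ≥ 0 be integers, and write κ(j−i) = ad + b with integers a and b satisfying 0 ≤ b < d. Then: if i − j > 0, then π_{κ/d}(q^{i+d'} + q^j) − π_{κ/d}(q^i − q^j) = κ; if 0 < j − i < d', then this difference equals κ − 2a − 1; and if j − i > d', then this difference equals 0. -/

import Mathlib

open Polynomial Finset

-- counting lemma
lemma count_exp (t θ : ℝ) :
    Nat.card {l : ℝ // 0 < l ∧ l ≤ 2 * Real.pi * t ∧
      Complex.exp ((l : ℂ) * Complex.I) = Complex.exp (((2 * Real.pi * θ : ℝ) : ℂ) * Complex.I)}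
      = (⌊t - θ⌋ - ⌊-θ⌋).toNat := by
  have hπ : (0:ℝ) < 2 * Real.pi := by positivity
  have hset : {l : ℝ | 0 < l ∧ l ≤ 2 * Real.pi * t ∧
      Complex.exp ((l : ℂ) * Complex.I) = Complex.exp (((2 * Real.pi * θ : ℝ) : ℂ) * Complex.I)}
      = (fun m : ℤ => 2 * Real.pi * (θ + m)) '' (Set.Icc (⌊-θ⌋ + 1) ⌊t - θ⌋) := by
    ext l
    simp only [Set.mem_setOf_eq, Set.mem_image, Set.mem_Icc]
    constructor
    · rintro ⟨h0, h1, h2⟩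
      rw [Complex.exp_eq_exp_iff_exists_int] at h2
      obtain ⟨m, hm⟩ := h2
      have hm' : (l : ℂ) = ((2 * Real.pi * (θ + m) : ℝ) : ℂ) := by
        have := mul_right_cancel₀ Complex.I_ne_zero
          (by rw [hm]; push_cast; ring : (l:ℂ) * Complex.I = ((2 * Real.pi * (θ + m) : ℝ):ℂ) * Complex.I)
        exact this
      have hl : l = 2 * Real.pi * (θ + m) := by exact_mod_cast hm'
      refine ⟨m, ⟨?_, ?_⟩, hl.symm⟩
      · have : (0:ℝ) < θ + m := by
          by_contra h
          push_neg at h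
          nlinarith [hl]
        have : -θ < (m:ℝ) := by linarith
        have := Int.lt_iff_add_one_le.mp (Int.floor_lt.mpr this)
        omega
      · apply Int.le_floor.mpr
        have : 2 * Real.pi * (θ + m) ≤ 2 * Real.pi * t := by rw [← hl]; exact h1
        have := le_of_mul_le_mul_left this hπ
        linarith
    · rintro ⟨m, ⟨hm1, hm2⟩, rfl⟩
      have h1 : -θ < (m:ℝ) := Int.floor_lt.mp (by omega)
      refine ⟨by nlinarith, ?_, ?_⟩
      · have : (m:ℝ) ≤ t - θ := Int.le_floor.mp hm2
        nlinarith
      · rw [Complex.exp_eq_exp_iff_exists_int]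
        exact ⟨m, by push_cast; ring⟩
  have : Nat.card {l : ℝ // 0 < l ∧ l ≤ 2 * Real.pi * t ∧
      Complex.exp ((l : ℂ) * Complex.I) = Complex.exp (((2 * Real.pi * θ : ℝ) : ℂ) * Complex.I)}
      = Nat.card ((fun m : ℤ => 2 * Real.pi * (θ + m)) '' (Set.Icc (⌊-θ⌋ + 1) ⌊t - θ⌋)) := by
    exact congrArg Nat.card (congrArg Set.Elem hset)
  rw [this, Nat.card_image_of_injective, Nat.card_coe_set_eq, ← Finset.coe_Icc,
    Set.ncard_coe_finset, Int.card_Icc]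
  · omega
  · intro x y hxy
    simp only at hxy
    have : (x:ℝ) = y := by
      have := mul_left_cancel₀ (ne_of_gt hπ) hxy
      linarith
    exact_mod_cast this

lemma sum_ediv_shift (N : ℕ) (hN : 0 < N) (m : ℤ) :
    ∑ k ∈ Finset.range N, (m + 1 + k) / (N:ℤ)
      = ∑ k ∈ Finset.range N, (m + k) / (N:ℤ) + 1 := by
  have hNz : (N:ℤ) ≠ 0 := by exact_mod_cast hN.ne'
  have h1 : ∑ k ∈ Finset.range N, (m + 1 + (k:ℤ)) / (N:ℤ)
      = ∑ k ∈ Finset.range N, (m + ((k+1 : ℕ):ℤ)) / (N:ℤ) :=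
    Finset.sum_congr rfl (fun k _ => by congr 1; push_cast; ring)
  have h2 := Finset.sum_range_succ' (fun k : ℕ => (m + (k:ℤ))/(N:ℤ)) N
  have h3 := Finset.sum_range_succ (fun k : ℕ => (m + (k:ℤ))/(N:ℤ)) N
  rw [h3] at h2
  have h4 : (m + (N:ℤ))/(N:ℤ) = m/(N:ℤ) + 1 := by
    simpa using Int.add_mul_ediv_right m 1 hNz
  simp only [Nat.cast_zero, add_zero] at h2
  rw [h4] at h2
  rw [h1]
  linarith [h2]

lemma sum_ediv (N : ℕ) (hN : 0 < N) (m : ℤ) :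
    ∑ k ∈ Finset.range N, (m + k) / (N:ℤ) = m := by
  induction m using Int.induction_on with
  | zero =>
    rw [Finset.sum_eq_zero]
    intro k hk
    simp only [Finset.mem_range] at hk
    rw [zero_add]
    exact Int.ediv_eq_zero_of_lt (by positivity) (by exact_mod_cast hk)
  | succ n ih =>
    have := sum_ediv_shift N hN n
    rw [ih] at this
    convert this using 2 with k
  | pred n ih =>
    have := sum_ediv_shift N hN (-(n:ℤ) - 1)
    rw [show -(n:ℤ) - 1 + 1 = -(n:ℤ) by ring] at this
    rw [ih] at this
    omega

lemma floor_div_nat' (r : ℝ) (N : ℕ) (hN : 0 < N) : ⌊r / (N:ℝ)⌋ = ⌊r⌋ / (N:ℤ) := by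
  have hNz : (0:ℝ) < N := by exact_mod_cast hN
  rw [Int.floor_eq_iff]
  constructor
  · rw [le_div_iff₀ hNz]
    calc ((⌊r⌋ / (N:ℤ) : ℤ):ℝ) * N = (((⌊r⌋ / (N:ℤ)) * N : ℤ) : ℝ) := by push_cast; ring
    _ ≤ (⌊r⌋ : ℝ) := by
        exact_mod_cast Int.ediv_mul_le ⌊r⌋ (by exact_mod_cast hN.ne' : (N:ℤ) ≠ 0)
    _ ≤ r := Int.floor_le r
  · rw [div_lt_iff₀ hNz]
    have h1 : r < ⌊r⌋ + 1 := Int.lt_floor_add_one r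
    have h2 : (⌊r⌋ : ℤ) + 1 ≤ (⌊r⌋ / (N:ℤ) + 1) * N := by
      have := Int.emod_lt_of_pos ⌊r⌋ (by exact_mod_cast hN : (0:ℤ) < N)
      have := Int.mul_ediv_add_emod ⌊r⌋ (N:ℤ)
      nlinarith
    calc r < (⌊r⌋:ℝ) + 1 := h1
    _ ≤ ((⌊r⌋ / (N:ℤ) + 1) * N : ℤ) := by exact_mod_cast h2
    _ = ((⌊r⌋ / (N:ℤ) : ℤ):ℝ) * N + N := by push_cast; ring
    _ ≤ (↑(⌊r⌋ / (N:ℤ)) + 1) * ↑N := by ring_nf; linarith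

lemma hermite_sum (N : ℕ) (hN : 0 < N) (x : ℝ) :
    ∑ k ∈ Finset.range N, ⌊x + (k:ℝ) / (N:ℝ)⌋ = ⌊(N:ℝ) * x⌋ := by
  have hNz : (0:ℝ) < N := by exact_mod_cast hN
  have h1 : ∀ k : ℕ, ⌊x + (k:ℝ)/(N:ℝ)⌋ = (⌊(N:ℝ)*x⌋ + k) / (N:ℤ) := by
    intro k
    have : x + (k:ℝ)/(N:ℝ) = ((N:ℝ)*x + k) / N := by field_simp
    rw [this, floor_div_nat' _ _ hN, Int.floor_add_natCast]
  rw [Finset.sum_congr rfl (fun k _ => h1 k), sum_ediv N hN]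

lemma sum_floor_sub (N : ℕ) (hN : 0 < N) (x : ℝ) :
    ∑ k ∈ Finset.range N, ⌊x - (k:ℝ) / (N:ℝ)⌋ = ⌊(N:ℝ) * x⌋ - N + 1 := by
  have hNz : (0:ℝ) < N := by exact_mod_cast hN
  have := Finset.sum_range_reflect (fun k : ℕ => ⌊(x - 1 + 1/(N:ℝ)) + (k:ℝ)/(N:ℝ)⌋) N
  rw [hermite_sum N hN (x - 1 + 1/(N:ℝ))] at this
  have heq : ∀ k ∈ Finset.range N, ⌊x - (k:ℝ)/(N:ℝ)⌋
      = ⌊(x - 1 + 1/(N:ℝ)) + ((N - 1 - k : ℕ):ℝ)/(N:ℝ)⌋ := by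
    intro k hk
    simp only [Finset.mem_range] at hk
    congr 1
    have : ((N - 1 - k : ℕ):ℝ) = (N:ℝ) - 1 - k := by
      have : k ≤ N - 1 := by omega
      push_cast [Nat.cast_sub (by omega : 1 ≤ N), Nat.cast_sub this]
      ring
    rw [this]
    field_simp
    ring
  rw [Finset.sum_congr rfl heq, this]
  have : (N:ℝ) * (x - 1 + 1/(N:ℝ)) = (N:ℝ)*x - N + 1 := by field_simp
  rw [this]
  have : (N:ℝ)*x - (N:ℝ) + 1 = ((N:ℝ)*x) + ((1 - N : ℤ):ℝ) := by push_cast; ring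
  rw [this, Int.floor_add_intCast]
  ring

/-- `argCount t f` is the cardinality of the multiset `Arg_t(f)` of real numbers `λ` with
`0 < λ ≤ 2πt` such that `e^{iλ}` is a (complex) root of the real polynomial `f`, each such `λ`
counted with the multiplicity of `e^{iλ}` as a root of `f`. -/
noncomputable def argCount (t : ℝ) (f : Polynomial ℝ) : ℕ :=
  ((f.map (algebraMap ℝ ℂ)).roots.map fun ξ =>
    Nat.card {l : ℝ // 0 < l ∧ l ≤ 2 * Real.pi * t ∧ Complex.exp ((l : ℂ) * Complex.I) = ξ}).sum

/-- `piFn κ d f` is the rational number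
`π_{κ/d}(f) = (a(f) + A(f))·(κ/d) + |Arg_{κ/d}(f)| + (1/2)·(multiplicity of 1 as a root of f)`,
where `a(f)` is the multiplicity of `0` as a root of `f` and `A(f)` is the degree of `f`. -/
noncomputable def piFn (κ d : ℕ) (f : Polynomial ℝ) : ℚ :=
  ((rootMultiplicity 0 f : ℚ) + (f.natDegree : ℚ)) * (κ : ℚ) / (d : ℚ)
    + (argCount ((κ : ℝ) / (d : ℝ)) f : ℚ) + (rootMultiplicity 1 f : ℚ) / 2

lemma argCount_aux (t : ℝ) (ht : 0 ≤ t) (n N : ℕ) (hN : 0 < N) (c : ℝ) (s : ℝ)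
    (hα : Complex.exp (((2 * Real.pi * s : ℝ) : ℂ) * Complex.I) ^ N = ((c:ℂ))) :
    (argCount t (X ^ n * (X ^ N - C c)) : ℤ) = ⌊(N:ℝ) * (t - s)⌋ - ⌊(N:ℝ) * (-s)⌋ := by
  have hNR : (0:ℝ) < N := by exact_mod_cast hN
  set α : ℂ := Complex.exp (((2 * Real.pi * s : ℝ) : ℂ) * Complex.I) with hαdef
  -- the image polynomial
  have hmap : (X ^ n * (X ^ N - C c) : Polynomial ℝ).map (algebraMap ℝ ℂ)
      = X ^ n * (X ^ N - C (c:ℂ)) := by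
    simp [Polynomial.map_mul, Polynomial.map_pow, Polynomial.map_sub, Polynomial.map_C]
  have hfact : (X ^ N - C (c:ℂ)) ≠ 0 := (monic_X_pow_sub_C (c:ℂ) hN.ne').ne_zero
  have hroots : (X ^ n * (X ^ N - C (c:ℂ))).roots
      = n • ({0} : Multiset ℂ) + (Multiset.range N).map
          (fun k => Complex.exp (2 * Real.pi * Complex.I / N) ^ k * α) := by
    rw [roots_mul (mul_ne_zero (pow_ne_zero n X_ne_zero) hfact), roots_pow, roots_X]
    congr 1
    have := (Complex.isPrimitiveRoot_exp N hN.ne').nthRoots_eq hα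
    rw [← this]
    rfl
  -- each root is exp(2π(k/N + s) i)
  have hroot_eq : ∀ k : ℕ, Complex.exp (2 * Real.pi * Complex.I / N) ^ k * α
      = Complex.exp (((2 * Real.pi * ((k:ℝ)/(N:ℝ) + s) : ℝ) : ℂ) * Complex.I) := by
    intro k
    rw [hαdef, ← Complex.exp_nat_mul, ← Complex.exp_add]
    congr 1
    have hNC : (N:ℂ) ≠ 0 := by exact_mod_cast hNR.ne'
    push_cast
    field_simp
  -- compute argCount
  have hsum : argCount t (X ^ n * (X ^ N - C c))
      = ∑ k ∈ Finset.range N, (⌊t - ((k:ℝ)/(N:ℝ) + s)⌋ - ⌊-((k:ℝ)/(N:ℝ) + s)⌋).toNat := by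
    rw [argCount, hmap, hroots, Multiset.map_add, Multiset.sum_add]
    have hzero : ((n • ({0} : Multiset ℂ)).map fun ξ =>
        Nat.card {l : ℝ // 0 < l ∧ l ≤ 2 * Real.pi * t ∧
          Complex.exp ((l : ℂ) * Complex.I) = ξ}).sum = 0 := by
      rw [Multiset.map_nsmul, Multiset.map_singleton, Multiset.sum_nsmul, Multiset.sum_singleton]
      have : IsEmpty {l : ℝ // 0 < l ∧ l ≤ 2 * Real.pi * t ∧
          Complex.exp ((l : ℂ) * Complex.I) = 0} :=
        ⟨fun ⟨l, _, _, h⟩ => Complex.exp_ne_zero _ h⟩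
      rw [Nat.card_of_isEmpty, smul_zero]
    rw [hzero, zero_add, Multiset.map_map]
    rw [← Finset.range_val, ← Finset.sum_map_val]
    apply Finset.sum_congr rfl
    intro k _
    simp only [Function.comp_apply]
    rw [hroot_eq k, count_exp t ((k:ℝ)/(N:ℝ) + s)]
  rw [hsum, Nat.cast_sum]
  have e0 : ∀ k ∈ Finset.range N, ((⌊t - ((k:ℝ)/(N:ℝ) + s)⌋ - ⌊-((k:ℝ)/(N:ℝ) + s)⌋).toNat : ℤ)
      = ⌊t - ((k:ℝ)/(N:ℝ) + s)⌋ - ⌊-((k:ℝ)/(N:ℝ) + s)⌋ := by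
    intro k _
    apply Int.toNat_of_nonneg
    apply sub_nonneg.mpr
    apply Int.floor_le_floor
    linarith
  rw [Finset.sum_congr rfl e0, Finset.sum_sub_distrib]
  have e1 : ∀ k ∈ Finset.range N, ⌊t - ((k:ℝ)/(N:ℝ) + s)⌋ = ⌊(t - s) - (k:ℝ)/(N:ℝ)⌋ := by
    intro k _; ring_nf
  have e2 : ∀ k ∈ Finset.range N, ⌊-((k:ℝ)/(N:ℝ) + s)⌋ = ⌊(-s) - (k:ℝ)/(N:ℝ)⌋ := by
    intro k _; ring_nf
  rw [Finset.sum_congr rfl e1, Finset.sum_congr rfl e2, sum_floor_sub N hN,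
    sum_floor_sub N hN]
  ring

lemma argCount_minus (t : ℝ) (ht : 0 ≤ t) (n N : ℕ) (hN : 0 < N) :
    (argCount t (X ^ n * (X ^ N - 1)) : ℤ) = ⌊(N:ℝ) * t⌋ := by
  have h := argCount_aux t ht n N hN 1 0 (by norm_num)
  rw [map_one] at h
  simpa using h

lemma argCount_plus (t : ℝ) (ht : 0 ≤ t) (n N : ℕ) (hN : 0 < N) :
    (argCount t (X ^ n * (X ^ N + 1)) : ℤ) = ⌊(N:ℝ) * t - 1/2⌋ + 1 := by
  have hNR : (0:ℝ) < N := by exact_mod_cast hN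
  have hα : Complex.exp (((2 * Real.pi * (1/(2*(N:ℝ))) : ℝ) : ℂ) * Complex.I) ^ N
      = ((-1 : ℝ) : ℂ) := by
    rw [← Complex.exp_nat_mul]
    have : (N:ℂ) * (((2 * Real.pi * (1/(2*(N:ℝ))) : ℝ) : ℂ) * Complex.I)
        = Real.pi * Complex.I := by
      have hNC : (N:ℂ) ≠ 0 := by exact_mod_cast hNR.ne'
      push_cast
      field_simp
    rw [this, Complex.exp_pi_mul_I]
    norm_num
  have h := argCount_aux t ht n N hN (-1) (1/(2*(N:ℝ))) hα
  rw [map_neg, map_one, sub_neg_eq_add] at h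
  rw [h]
  have e1 : (N:ℝ) * (t - 1/(2*(N:ℝ))) = (N:ℝ) * t - 1/2 := by field_simp
  have e2 : (N:ℝ) * (-(1/(2*(N:ℝ)))) = -(1/2) := by field_simp
  rw [e1, e2]
  have : ⌊(-(1/2) : ℝ)⌋ = -1 := by
    rw [Int.floor_eq_iff]; norm_num
  rw [this]
  ring

-- root multiplicities and degrees
lemma hXn_ne (n : ℕ) : (X ^ n : Polynomial ℝ) ≠ 0 := pow_ne_zero n X_ne_zero

lemma rm0_Xn (n : ℕ) : rootMultiplicity 0 (X ^ n : Polynomial ℝ) = n := by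
  have : (X ^ n : Polynomial ℝ) = (X - C 0) ^ n := by simp
  rw [this, rootMultiplicity_X_sub_C_pow]

lemma piFn_minus (κ d n N : ℕ) (hκ : 0 < κ) (hd : 0 < d) (hN : 0 < N) :
    piFn κ d (X ^ n * (X ^ N - 1)) =
      (2 * (n:ℚ) + N) * κ / d + (⌊((N:ℚ) * κ / d)⌋ : ℚ) + 1/2 := by
  have hfact : (X ^ N - 1 : Polynomial ℝ) ≠ 0 := by
    have : (X ^ N - 1 : Polynomial ℝ) = X ^ N - C 1 := by rw [map_one]
    rw [this]
    exact (monic_X_pow_sub_C (1:ℝ) hN.ne').ne_zero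
  have hne : (X ^ n * (X ^ N - 1) : Polynomial ℝ) ≠ 0 := mul_ne_zero (hXn_ne n) hfact
  have hrm0 : rootMultiplicity 0 (X ^ n * (X ^ N - 1) : Polynomial ℝ) = n := by
    rw [rootMultiplicity_mul hne, rm0_Xn, rootMultiplicity_eq_zero, add_zero]
    simp [IsRoot, zero_pow hN.ne']
  have hrm1 : rootMultiplicity 1 (X ^ n * (X ^ N - 1) : Polynomial ℝ) = 1 := by
    rw [rootMultiplicity_mul hne]
    have h1 : rootMultiplicity 1 (X ^ n : Polynomial ℝ) = 0 := by
      rw [rootMultiplicity_eq_zero]; simp [IsRoot]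
    have hgeom : ((∑ i ∈ Finset.range N, X ^ i) * (X - 1) : Polynomial ℝ) = X ^ N - 1 :=
      geom_sum_mul X N
    have h2 : rootMultiplicity 1 (X ^ N - 1 : Polynomial ℝ) = 1 := by
      rw [← hgeom, rootMultiplicity_mul (hgeom ▸ hfact)]
      have ha : rootMultiplicity 1 ((∑ i ∈ Finset.range N, X ^ i) : Polynomial ℝ) = 0 := by
        rw [rootMultiplicity_eq_zero]
        simp only [IsRoot, eval_finset_sum, eval_pow, eval_X, one_pow, Finset.sum_const,
          Finset.card_range, nsmul_eq_mul, mul_one]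
        exact_mod_cast hN.ne'
      have hb : rootMultiplicity 1 (X - 1 : Polynomial ℝ) = 1 := by
        have : (X - 1 : Polynomial ℝ) = X - C 1 := by rw [map_one]
        rw [this, rootMultiplicity_X_sub_C_self]
      rw [ha, hb]
    rw [h1, h2]
  have hdeg : (X ^ n * (X ^ N - 1) : Polynomial ℝ).natDegree = n + N := by
    rw [natDegree_mul (hXn_ne n) hfact, natDegree_pow, natDegree_X, mul_one]
    congr 1
    have : (X ^ N - 1 : Polynomial ℝ) = X ^ N - C 1 := by rw [map_one]
    rw [this, natDegree_X_pow_sub_C]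
  have harg : (argCount ((κ:ℝ)/(d:ℝ)) (X ^ n * (X ^ N - 1)) : ℚ)
      = (⌊((N:ℚ) * κ / d)⌋ : ℚ) := by
    have h := argCount_minus ((κ:ℝ)/(d:ℝ)) (by positivity) n N hN
    have he : (N:ℝ) * ((κ:ℝ)/(d:ℝ)) = (((N:ℚ) * κ / d : ℚ) : ℝ) := by push_cast; ring
    rw [he, Rat.floor_cast] at h
    exact_mod_cast h
  rw [piFn, hrm0, hrm1, hdeg, harg]
  push_cast
  ring

lemma piFn_plus (κ d n N : ℕ) (hκ : 0 < κ) (hd : 0 < d) (hN : 0 < N) :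
    piFn κ d (X ^ n * (X ^ N + 1)) =
      (2 * (n:ℚ) + N) * κ / d + (⌊((N:ℚ) * κ / d - 1/2)⌋ : ℚ) + 1 := by
  have hfact : (X ^ N + 1 : Polynomial ℝ) ≠ 0 := by
    have : (X ^ N + 1 : Polynomial ℝ) = X ^ N + C 1 := by rw [map_one]
    rw [this]
    exact (monic_X_pow_add_C (a := (1:ℝ)) hN.ne').ne_zero
  have hne : (X ^ n * (X ^ N + 1) : Polynomial ℝ) ≠ 0 := mul_ne_zero (hXn_ne n) hfact
  have hrm0 : rootMultiplicity 0 (X ^ n * (X ^ N + 1) : Polynomial ℝ) = n := by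
    rw [rootMultiplicity_mul hne, rm0_Xn, rootMultiplicity_eq_zero, add_zero]
    simp [IsRoot, zero_pow hN.ne']
  have hrm1 : rootMultiplicity 1 (X ^ n * (X ^ N + 1) : Polynomial ℝ) = 0 := by
    rw [rootMultiplicity_eq_zero]
    simp [IsRoot]
  have hdeg : (X ^ n * (X ^ N + 1) : Polynomial ℝ).natDegree = n + N := by
    rw [natDegree_mul (hXn_ne n) hfact, natDegree_pow, natDegree_X, mul_one]
    congr 1
    have : (X ^ N + 1 : Polynomial ℝ) = X ^ N + C 1 := by rw [map_one]
    rw [this]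
    exact natDegree_X_pow_add_C
  have harg : (argCount ((κ:ℝ)/(d:ℝ)) (X ^ n * (X ^ N + 1)) : ℚ)
      = (⌊((N:ℚ) * κ / d - 1/2)⌋ : ℚ) + 1 := by
    have h := argCount_plus ((κ:ℝ)/(d:ℝ)) (by positivity) n N hN
    have he : (N:ℝ) * ((κ:ℝ)/(d:ℝ)) - 1/2 = (((N:ℚ) * κ / d - 1/2 : ℚ) : ℝ) := by
      push_cast; ring
    rw [he, Rat.floor_cast] at h
    exact_mod_cast h
  rw [piFn, hrm0, hrm1, hdeg, harg]
  push_cast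
  ring

lemma piFn_neg (κ d : ℕ) (p : Polynomial ℝ) (hp : p ≠ 0) : piFn κ d (-p) = piFn κ d p := by
  have hC : (-p : Polynomial ℝ) = C (-1) * p := by
    rw [map_neg, map_one]; ring
  have hCne : (C (-1) * p : Polynomial ℝ) ≠ 0 := by
    rw [← hC]; exact neg_ne_zero.mpr hp
  have hrm : ∀ x : ℝ, rootMultiplicity x (-p) = rootMultiplicity x p := by
    intro x
    rw [hC, rootMultiplicity_mul hCne, rootMultiplicity_eq_zero (by simp [IsRoot]), zero_add]
  have harg : argCount ((κ:ℝ)/(d:ℝ)) (-p) = argCount ((κ:ℝ)/(d:ℝ)) p := by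
    unfold argCount
    rw [hC, Polynomial.map_mul, map_C, roots_C_mul]
    · norm_num
  rw [piFn, piFn, hrm 0, hrm 1, natDegree_neg, harg]

lemma fact_sub (m n : ℕ) (h : n ≤ m) :
    (X ^ m - X ^ n : Polynomial ℝ) = X ^ n * (X ^ (m - n) - 1) := by
  rw [mul_sub, mul_one, ← pow_add, Nat.add_sub_cancel' h]

lemma fact_add (m n : ℕ) (h : n ≤ m) :
    (X ^ m + X ^ n : Polynomial ℝ) = X ^ n * (X ^ (m - n) + 1) := by
  rw [mul_add, mul_one, ← pow_add, Nat.add_sub_cancel' h]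

lemma floor_intdiv (z : ℤ) (d : ℕ) (a b : ℤ) (hz : z = a * d + b) (hb0 : 0 ≤ b)
    (hbd : b < (d:ℤ)) : ⌊(z:ℚ) / (d:ℚ)⌋ = a := by
  have hd0 : 0 < d := by omega
  rw [show ((d:ℚ)) = ((d:ℕ):ℚ) from rfl, Rat.floor_intCast_div_natCast, hz,
    show a * (d:ℤ) + b = b + a * d by ring,
    Int.add_mul_ediv_right b a (by exact_mod_cast hd0.ne' : (d:ℤ) ≠ 0),
    Int.ediv_eq_zero_of_lt hb0 hbd, zero_add]

/-- Proposition 8.6, second equation: `d` even, `d' = d/2`, and `κ(j−i) = ad + b` with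
`0 ≤ b < d`.  The difference `π_{κ/d}(q^{i+d'} + q^j) − π_{κ/d}(q^i − q^j)` equals `κ` if
`i − j > 0`, equals `κ − 2a − 1` if `0 < j − i < d'`, and equals `0` if `j − i > d'`. -/
theorem piFn_cohook_add (κ d : ℕ) (hd : 2 ≤ d) (heven : Even d) (hκ : 1 ≤ κ)
    (hcop : Nat.Coprime κ d) (d' : ℕ) (hd' : 2 * d' = d) (i j : ℕ) (a b : ℤ)
    (hab : (κ : ℤ) * ((j : ℤ) - (i : ℤ)) = a * (d : ℤ) + b)
    (hb0 : 0 ≤ b) (hbd : b < (d : ℤ)) :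
    (0 < (i : ℤ) - (j : ℤ) →
      piFn κ d (X ^ (i + d') + X ^ j) - piFn κ d (X ^ i - X ^ j) = (κ : ℚ)) ∧
    (0 < (j : ℤ) - (i : ℤ) → (j : ℤ) - (i : ℤ) < (d' : ℤ) →
      piFn κ d (X ^ (i + d') + X ^ j) - piFn κ d (X ^ i - X ^ j) =
        (κ : ℚ) - 2 * (a : ℚ) - 1) ∧
    ((d' : ℤ) < (j : ℤ) - (i : ℤ) →
      piFn κ d (X ^ (i + d') + X ^ j) - piFn κ d (X ^ i - X ^ j) = 0) := by
  have hd0 : 0 < d := by omega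
  have hd'0 : 0 < d' := by omega
  have hκ0 : 0 < κ := hκ
  have hκodd : κ % 2 = 1 := by
    rcases Nat.even_or_odd κ with h | h
    · exfalso
      obtain ⟨k, hk⟩ := h
      obtain ⟨l, hl⟩ := heven
      have : 2 ∣ Nat.gcd κ d := Nat.dvd_gcd ⟨k, by omega⟩ ⟨l, by omega⟩
      rw [hcop] at this
      omega
    · exact Nat.odd_iff.mp h
  obtain ⟨c, hc⟩ : ∃ c, κ = 2 * c + 1 := ⟨κ / 2, by omega⟩
  have hdq : (d:ℚ) = 2 * (d':ℚ) := by exact_mod_cast hd'.symm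
  have hd'q : (d':ℚ) ≠ 0 := by positivity
  have hhalf : (d':ℚ) * κ / d = (c:ℚ) + 1/2 := by
    rw [hdq, hc]; push_cast; field_simp
  refine ⟨?_, ?_, ?_⟩
  · -- case 1 : j < i
    intro hij
    have hji : j < i := by omega
    set Nf := i - j with hNfdef
    set Ng := i + d' - j with hNgdef
    have hNf : 0 < Nf := by omega
    have hNg : 0 < Ng := by omega
    have hNgNf : Ng = Nf + d' := by omega
    rw [fact_sub i j (by omega), fact_add (i + d') j (by omega),
      piFn_minus κ d j Nf hκ0 hd0 hNf, piFn_plus κ d j Ng hκ0 hd0 hNg]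
    have key : ((Ng:ℚ) * κ / d - 1/2) = (Nf:ℚ) * κ / d + ((c:ℤ):ℚ) := by
      have hNgq : (Ng:ℚ) = (Nf:ℚ) + (d':ℚ) := by exact_mod_cast hNgNf
      calc (Ng:ℚ) * κ / d - 1/2 = (Nf:ℚ) * κ / d + ((d':ℚ) * κ / d - 1/2) := by
            rw [hNgq]; ring
      _ = (Nf:ℚ) * κ / d + ((c:ℤ):ℚ) := by rw [hhalf]; push_cast; ring
    rw [key, Int.floor_add_intCast]
    have hNgq : (Ng:ℚ) = (Nf:ℚ) + (d':ℚ) := by exact_mod_cast hNgNf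
    push_cast
    rw [hNgq, hdq, hc]
    push_cast
    field_simp
    ring
  · -- case 2 : 0 < j - i < d'
    intro hij hijd'
    have hji : i < j := by omega
    have hjlt : j < i + d' := by omega
    set Nf := j - i with hNfdef
    set Ng := i + d' - j with hNgdef
    have hNf : 0 < Nf := by omega
    have hNg : 0 < Ng := by omega
    have hNgNf : Ng + Nf = d' := by omega
    -- b ≠ 0
    have hbne : b ≠ 0 := by
      intro hb
      rw [hb, add_zero] at hab
      have hdvd : (d:ℤ) ∣ (κ:ℤ) * ((j:ℤ) - i) := ⟨a, by linarith [hab]⟩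
      have hco : IsCoprime ((d:ℤ)) ((κ:ℤ)) := by
        rw [Int.isCoprime_iff_gcd_eq_one]
        simpa [Int.gcd, Nat.gcd_comm] using hcop
      have : (d:ℤ) ∣ ((j:ℤ) - i) := (IsCoprime.dvd_of_dvd_mul_left hco hdvd)
      have := Int.le_of_dvd (by omega) this
      omega
    -- rewrite f
    have hf : (X ^ i - X ^ j : Polynomial ℝ) = -(X ^ i * (X ^ Nf - 1)) := by
      rw [← fact_sub j i (by omega)]; ring
    have hfne : (X ^ i * (X ^ Nf - 1) : Polynomial ℝ) ≠ 0 := by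
      apply mul_ne_zero (pow_ne_zero i X_ne_zero)
      have : (X ^ Nf - 1 : Polynomial ℝ) = X ^ Nf - C 1 := by rw [map_one]
      rw [this]
      exact (monic_X_pow_sub_C (1:ℝ) hNf.ne').ne_zero
    rw [hf, piFn_neg κ d _ hfne, fact_add (i + d') j (by omega),
      piFn_minus κ d i Nf hκ0 hd0 hNf, piFn_plus κ d j Ng hκ0 hd0 hNg]
    have hNfZ : ((κ * Nf : ℕ) : ℤ) = a * d + b := by
      have h1 : ((Nf:ℕ):ℤ) = (j:ℤ) - i := by omega
      push_cast
      rw [h1, hab]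
    have hA : ⌊(Nf:ℚ) * κ / d⌋ = a := by
      have h1 : (Nf:ℚ) * κ / d = (((κ * Nf : ℕ):ℤ):ℚ) / (d:ℚ) := by push_cast; ring
      rw [h1, floor_intdiv _ d a b hNfZ hb0 hbd]
    have hB : ⌊-((Nf:ℚ) * κ / d)⌋ = -a - 1 := by
      have h1 : -((Nf:ℚ) * κ / d) = (((-(κ * Nf : ℕ) : ℤ)):ℚ) / (d:ℚ) := by push_cast; ring
      rw [h1, floor_intdiv _ d (-a - 1) (d - b) (by linear_combination -hNfZ) (by omega) (by omega)]
    have key : ((Ng:ℚ) * κ / d - 1/2) = -((Nf:ℚ) * κ / d) + ((c:ℤ):ℚ) := by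
      have hNgq : (Ng:ℚ) = (d':ℚ) - (Nf:ℚ) := by
        have : (Ng:ℚ) + (Nf:ℚ) = (d':ℚ) := by exact_mod_cast hNgNf
        linarith
      calc (Ng:ℚ) * κ / d - 1/2 = -((Nf:ℚ) * κ / d) + ((d':ℚ) * κ / d - 1/2) := by
            rw [hNgq]; ring
      _ = -((Nf:ℚ) * κ / d) + ((c:ℤ):ℚ) := by rw [hhalf]; push_cast; ring
    rw [key, Int.floor_add_intCast, hA, hB]
    have hNgq : (Ng:ℚ) = (d':ℚ) - (Nf:ℚ) := by
      have : (Ng:ℚ) + (Nf:ℚ) = (d':ℚ) := by exact_mod_cast hNgNf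
      linarith
    have hjq : (j:ℚ) = (i:ℚ) + (Nf:ℚ) := by
      have : (i:ℕ) + Nf = j := by omega
      exact_mod_cast this.symm
    push_cast
    rw [hNgq, hjq, hdq, hc]
    push_cast
    field_simp
    ring
  · -- case 3 : d' < j - i
    intro hij
    have hji : i + d' < j := by omega
    set Nf := j - i with hNfdef
    set Ng := j - (i + d') with hNgdef
    have hNf : 0 < Nf := by omega
    have hNg : 0 < Ng := by omega
    have hNgNf : Ng + d' = Nf := by omega
    have hf : (X ^ i - X ^ j : Polynomial ℝ) = -(X ^ i * (X ^ Nf - 1)) := by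
      rw [← fact_sub j i (by omega)]; ring
    have hfne : (X ^ i * (X ^ Nf - 1) : Polynomial ℝ) ≠ 0 := by
      apply mul_ne_zero (pow_ne_zero i X_ne_zero)
      have : (X ^ Nf - 1 : Polynomial ℝ) = X ^ Nf - C 1 := by rw [map_one]
      rw [this]
      exact (monic_X_pow_sub_C (1:ℝ) hNf.ne').ne_zero
    have hg : (X ^ (i + d') + X ^ j : Polynomial ℝ) = X ^ (i + d') * (X ^ Ng + 1) := by
      rw [add_comm]
      exact fact_add j (i + d') (by omega)
    rw [hf, piFn_neg κ d _ hfne, hg,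
      piFn_minus κ d i Nf hκ0 hd0 hNf, piFn_plus κ d (i + d') Ng hκ0 hd0 hNg]
    have key : ((Ng:ℚ) * κ / d - 1/2) = (Nf:ℚ) * κ / d + ((-(c:ℤ) - 1 : ℤ):ℚ) := by
      have hNgq : (Ng:ℚ) = (Nf:ℚ) - (d':ℚ) := by
        have : (Ng:ℚ) + (d':ℚ) = (Nf:ℚ) := by exact_mod_cast hNgNf
        linarith
      calc (Ng:ℚ) * κ / d - 1/2 = (Nf:ℚ) * κ / d - ((d':ℚ) * κ / d + 1/2) := by
            rw [hNgq]; ring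
      _ = (Nf:ℚ) * κ / d + ((-(c:ℤ) - 1 : ℤ):ℚ) := by rw [hhalf]; push_cast; ring
    rw [key, Int.floor_add_intCast]
    have hNgq : (Ng:ℚ) = (Nf:ℚ) - (d':ℚ) := by
      have : (Ng:ℚ) + (d':ℚ) = (Nf:ℚ) := by exact_mod_cast hNgNf
      linarith
    have hjq : (j:ℚ) = (i:ℚ) + (Nf:ℚ) := by
      have : (i:ℕ) + Nf = j := by omega
      exact_mod_cast this.symm
    push_cast
    rw [hNgq, hdq, hc]
    push_cast
    field_simp
    ring
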